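/- Wayment's theorem (integral Flett's mean value theorem): If f : ℝ → ℝ is continuous on the closed interval [a,b] (with a < b) and f(a) = f(b), then there exists a point η ∈ (a,b) such that f(η) = (1/(η-a)) · ∫_a^η f(t) dt. -/

import Mathlib

open intervalIntegral Set Filter Topology in
private theorem wayment_aux (f : ℝ → ℝ) (a b : ℝ) (hab : a < b)
    (hf : Continuous f) (hends : f a = f b)
    (hle : (∫ t in a..b, f t) ≤ (b - a) * f a) :
    ∃ η ∈ Set.Ioo a b, f η = (1 / (η - a)) * ∫ t in a..η, f t := by
  set F : ℝ → ℝ := fun x => ∫ t in a..x, f t with hFdef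
  have hF : ∀ x, HasDerivAt F (f x) x := fun x =>
    (hf.integral_hasStrictDerivAt a x).hasDerivAt
  have hFcont : Continuous F := by
    rw [continuous_iff_continuousAt]; exact fun x => (hF x).continuousAt
  set g : ℝ → ℝ := fun x => if x ≤ a then f a else (x - a)⁻¹ * F x with hgdef
  have hga : g a = f a := by simp [hgdef]
  have hgval : ∀ x, a < x → g x = (x - a)⁻¹ * F x := by
    intro x hx; simp [hgdef, not_le.2 hx]
  -- derivative of g at points > a
  have hg' : ∀ x, a < x → HasDerivAt g ((x - a)⁻¹ * (f x - g x)) x := by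
    intro x hx
    have hx0 : x - a ≠ 0 := sub_ne_zero.2 hx.ne'
    have h1 : HasDerivAt (fun y : ℝ => (y - a)⁻¹) (-1 / (x - a) ^ 2) x := by
      simpa using ((hasDerivAt_id x).sub_const a).fun_inv hx0
    have h2 : HasDerivAt (fun y => (y - a)⁻¹ * F y)
        (-1 / (x - a) ^ 2 * F x + (x - a)⁻¹ * f x) x := h1.mul (hF x)
    have hev : g =ᶠ[nhds x] fun y => (y - a)⁻¹ * F y := by
      filter_upwards [eventually_gt_nhds hx] with y hy
      simp [hgdef, not_le.2 hy]
    have h3 : HasDerivAt g (-1 / (x - a) ^ 2 * F x + (x - a)⁻¹ * f x) x :=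
      h2.congr_of_eventuallyEq hev
    convert h3 using 1
    rw [hgval x hx]
    field_simp
    ring
  -- continuity of g on [a, b]
  have hgc : ContinuousOn g (Icc a b) := by
    intro x hx
    rcases eq_or_lt_of_le hx.1 with rfl | hax
    · -- continuity at a within Icc
      have hslope : Tendsto (slope F a) (𝓝[≠] a) (nhds (f a)) :=
        hasDerivAt_iff_tendsto_slope.1 (hF a)
      have h1 : Tendsto g (𝓝[>] a) (nhds (f a)) := by
        refine (hslope.mono_left (nhdsWithin_mono _ fun y hy => ?_)).congr' ?_
        · exact ne_of_gt hy
        · filter_upwards [self_mem_nhdsWithin] with y (hy : a < y)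
          rw [slope_def_field, hgval y hy]
          have : F a = 0 := by simp [hFdef]
          rw [this, sub_zero, div_eq_inv_mul]
      have h2 : Tendsto g (pure a) (nhds (f a)) := by
        rw [← hga]; exact tendsto_pure_nhds g a
      have h3 : Tendsto g (𝓝[Ici a] a) (nhds (f a)) := by
        rw [← Set.Ioi_insert, nhdsWithin_insert]
        exact h2.sup h1
      have : Tendsto g (𝓝[Icc a b] a) (nhds (f a)) :=
        h3.mono_left (nhdsWithin_mono _ Icc_subset_Ici_self)
      rw [ContinuousWithinAt, hga]; exact this
    · exact ((hg' x hax).continuousAt).continuousWithinAt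
  have hgb : g b = (b - a)⁻¹ * F b := hgval b hab
  have hba : (0 : ℝ) < b - a := sub_pos.2 hab
  have hgba : g b ≤ g a := by
    rw [hgb, hga]
    rw [inv_mul_le_iff₀ hba]
    linarith [hle]
  -- final extraction from a critical point
  have key : ∀ η ∈ Set.Ioo a b, (η - a)⁻¹ * (f η - g η) = 0 →
      f η = (1 / (η - a)) * ∫ t in a..η, f t := by
    intro η hη h0
    have hη0 : (η - a)⁻¹ ≠ 0 := inv_ne_zero (sub_ne_zero.2 hη.1.ne')
    have : f η = g η := by
      rcases mul_eq_zero.1 h0 with h | h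
      · exact absurd h hη0
      · linarith
    rw [this, hgval η hη.1, one_div]
  rcases eq_or_lt_of_le hgba with heq | hlt
  · -- Rolle directly on [a, b]
    obtain ⟨η, hη, h0⟩ := exists_hasDerivAt_eq_zero hab hgc heq.symm
      (fun x hx => hg' x hx.1)
    exact ⟨η, hη, key η hη h0⟩
  · -- g b < g a; find c with g c = g b, then Rolle on [c, b]
    have hfbgb : 0 < f b - (b - a)⁻¹ * F b := by
      rw [← hgb, ← hends, ← hga]; linarith
    have hcont : ContinuousAt (fun x => f x - (x - a)⁻¹ * F x) b := by
      exact (hf.continuousAt.sub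
        ((((continuousAt_id).sub continuousAt_const).inv₀
          (sub_ne_zero.2 hab.ne')).mul hFcont.continuousAt))
    have hev : ∀ᶠ x in 𝓝[<] b, 0 < f x - (x - a)⁻¹ * F x ∧ a < x := by
      have h1 : ∀ᶠ x in nhds b, 0 < f x - (x - a)⁻¹ * F x :=
        hcont (Ioi_mem_nhds (by simpa using hfbgb))
      have h2 : ∀ᶠ x in nhds b, a < x := eventually_gt_nhds hab
      exact (h1.and h2).filter_mono nhdsWithin_le_nhds
    obtain ⟨l, hl, hlsub⟩ := mem_nhdsLT_iff_exists_Ioo_subset.1 hev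
    set x0 : ℝ := (max l a + b) / 2 with hx0def
    have hmax : max l a < b := max_lt hl hab
    have hx0l : max l a < x0 := by rw [hx0def]; linarith
    have hx0b : x0 < b := by rw [hx0def]; linarith
    have hax0 : a < x0 := lt_of_le_of_lt (le_max_right l a) hx0l
    have hP : ∀ x ∈ Ioo x0 b, 0 < f x - (x - a)⁻¹ * F x ∧ a < x := by
      intro x hx
      exact hlsub ⟨lt_of_le_of_lt (le_max_left l a) (hx0l.trans hx.1), hx.2⟩
    -- g is strictly monotone on [x0, b]
    have hmono : StrictMonoOn g (Icc x0 b) := by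
      apply strictMonoOn_of_deriv_pos (convex_Icc x0 b)
      · exact hgc.mono (Icc_subset_Icc hax0.le le_rfl)
      · intro x hx
        rw [interior_Icc] at hx
        obtain ⟨hp, hax⟩ := hP x hx
        rw [(hg' x hax).deriv]
        have := hgval x hax
        apply mul_pos (inv_pos.2 (sub_pos.2 hax))
        linarith
    have hgx0 : g x0 < g b :=
      hmono ⟨le_rfl, hx0b.le⟩ ⟨hx0b.le, le_rfl⟩ hx0b
    -- IVT on [a, x0]
    have hivt : g b ∈ Ioo (g x0) (g a) := ⟨hgx0, hlt⟩
    obtain ⟨c, hc, hgc'⟩ := intermediate_value_Ioo' hax0.le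
      (hgc.mono (Icc_subset_Icc le_rfl (hx0b.le.trans le_rfl))) hivt
    -- Rolle on [c, b]
    have hcb : c < b := hc.2.trans hx0b
    obtain ⟨η, hη, h0⟩ := exists_hasDerivAt_eq_zero hcb
      (hgc.mono (Icc_subset_Icc hc.1.le le_rfl)) hgc'
      (fun x hx => hg' x (hc.1.trans hx.1))
    have hη' : η ∈ Set.Ioo a b := ⟨hc.1.trans hη.1, hη.2⟩
    exact ⟨η, hη', key η hη' h0⟩

open intervalIntegral Set in
private theorem wayment_cont (f : ℝ → ℝ) (a b : ℝ) (hab : a < b)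
    (hf : Continuous f) (hends : f a = f b) :
    ∃ η ∈ Set.Ioo a b, f η = (1 / (η - a)) * ∫ t in a..η, f t := by
  by_cases hle : (∫ t in a..b, f t) ≤ (b - a) * f a
  · exact wayment_aux f a b hab hf hends hle
  · push_neg at hle
    obtain ⟨η, hη, heq⟩ := wayment_aux (fun x => -f x) a b hab hf.neg
      (by simp [hends])
      (by show (∫ t in a..b, -f t) ≤ (b - a) * -f a
          rw [intervalIntegral.integral_neg, mul_neg]; linarith)
    refine ⟨η, hη, ?_⟩
    rw [intervalIntegral.integral_neg] at heq
    have : -f η = (1 / (η - a)) * -(∫ t in a..η, f t) := heq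
    linarith [this, mul_neg (1 / (η - a)) (∫ t in a..η, f t)]

open intervalIntegral in
/-- **Wayment's theorem** (integral Flett's mean value theorem). If `f` is continuous on
`[a,b]` and `f(a) = f(b)`, then there exists `η ∈ (a,b)` with
`f(η) = (1/(η-a)) ∫_a^η f(t) dt`. -/
theorem wayment_theorem (f : ℝ → ℝ) (a b : ℝ) (hab : a < b)
    (hfc : ContinuousOn f (Set.Icc a b)) (hends : f a = f b) :
    ∃ η ∈ Set.Ioo a b, f η = (1 / (η - a)) * ∫ t in a..η, f t := by
  set c : ℝ → ℝ := fun x => max a (min b x) with hcdef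
  have hcmem : ∀ x, c x ∈ Set.Icc a b :=
    fun x => ⟨le_max_left _ _, max_le hab.le (min_le_left _ _)⟩
  have hceq : ∀ x ∈ Set.Icc a b, c x = x := by
    intro x hx
    rw [hcdef]; simp only []
    rw [min_eq_right hx.2, max_eq_right hx.1]
  set g : ℝ → ℝ := fun x => f (c x) with hgdef
  have hgcont : Continuous g :=
    hfc.comp_continuous (continuous_const.max (continuous_const.min continuous_id)) hcmem
  have hgf : ∀ x ∈ Set.Icc a b, g x = f x := fun x hx => by rw [hgdef]; simp [hceq x hx]
  obtain ⟨η, hη, heq⟩ := wayment_cont g a b hab hgcont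
    (by rw [hgf a ⟨le_rfl, hab.le⟩, hgf b ⟨hab.le, le_rfl⟩, hends])
  refine ⟨η, hη, ?_⟩
  have hint : (∫ t in a..η, g t) = ∫ t in a..η, f t := by
    apply intervalIntegral.integral_congr
    intro t ht
    rw [Set.uIcc_of_le hη.1.le] at ht
    exact hgf t ⟨ht.1, ht.2.trans hη.2.le⟩
  rw [← hint, ← hgf η ⟨hη.1.le, hη.2.le⟩]
  exact heq
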